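/- For the half-line Schrödinger operator family H(k) = k² - d²/dy² on L²(ℝ₊) with Robin-type boundary condition determined by W(k,z) = K - ikL - M·μ(k,z) where μ(k,z) = √(k² - z) (positive real part) and K, L, M real with M ≠ 0, the bound-state energies λ < k² are exactly λ(k) = k² - (K + ikL)²/M² subject to (K + ikL)/(-M) > 0; in particular for K = 0, |L| = |M| there is a flat band λ(k) = 0 on a half-line of momenta. -/

import Mathlib

lemma hasDerivAt_cexp_real (c : ℂ) (y : ℝ) :
    HasDerivAt (fun y : ℝ => Complex.exp (c * y)) (c * Complex.exp (c * y)) y := by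
  have h1 := (((hasDerivAt_id (y : ℂ)).const_mul c).cexp).comp_ofReal
  simpa [mul_comm] using h1

lemma deriv_cexp_real (c : ℂ) :
    deriv (fun y : ℝ => Complex.exp (c * y)) = fun y : ℝ => c * Complex.exp (c * y) := by
  funext y; exact (hasDerivAt_cexp_real c y).deriv

lemma deriv2_cexp_real (c : ℂ) (y : ℝ) :
    deriv (deriv (fun y : ℝ => Complex.exp (c * y))) y = c ^ 2 * Complex.exp (c * y) := by
  rw [deriv_cexp_real c]
  have : HasDerivAt (fun y : ℝ => c * Complex.exp (c * y)) (c ^ 2 * Complex.exp (c * y)) y := by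
    have := (hasDerivAt_cexp_real c y).const_mul c
    simpa [pow_two, mul_assoc] using this
  exact this.deriv

lemma key (K ℓ M : ℝ) (hM : M ≠ 0) (k lam : ℝ)
    (h1 : lam = k ^ 2 - (K + k * ℓ) ^ 2 / M ^ 2) (h2 : 0 < (K + k * ℓ) / (-M)) :
    ∃ ψ : ℝ → ℂ, ∃ μ : ℝ, 0 < μ ∧
      (∀ y : ℝ, ψ y = Complex.exp (-(μ : ℂ) * y)) ∧
      (∀ y : ℝ, -(deriv (deriv ψ) y) + (k ^ 2 : ℂ) * ψ y = (lam : ℂ) * ψ y) ∧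
      ((K + k * ℓ : ℝ) : ℂ) * ψ 0 - (M : ℂ) * deriv ψ 0 = 0 := by
  have hM' : (-M) ≠ 0 := neg_ne_zero.mpr hM
  set μ : ℝ := (K + k * ℓ) / (-M) with hμdef
  have hμM : μ * M = -(K + k * ℓ) := by rw [hμdef]; field_simp
  refine ⟨fun y => Complex.exp (-(μ : ℂ) * y), μ, h2, fun y => rfl, ?_, ?_⟩
  · intro y
    rw [deriv2_cexp_real (-(μ : ℂ))]
    have hμ2 : (μ : ℂ) ^ 2 = (k : ℂ) ^ 2 - (lam : ℂ) := by
      have : μ ^ 2 = k ^ 2 - lam := by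
        rw [h1, hμdef]; field_simp; ring
      exact_mod_cast this
    rw [neg_pow, hμ2]; ring
  · rw [deriv_cexp_real (-(μ : ℂ))]
    have hμMc : (μ : ℂ) * M = -((K : ℂ) + k * ℓ) := by exact_mod_cast hμM
    simp only [Complex.ofReal_mul, mul_zero, Complex.ofReal_zero, Complex.exp_zero, mul_one]
    push_cast
    linear_combination hμMc

theorem stmt19 (K ℓ M : ℝ) (hM : M ≠ 0) :
    (∀ k lam : ℝ, lam < k ^ 2 →
      ((∃ ψ : ℝ → ℂ, ∃ μ : ℝ, 0 < μ ∧
          (∀ y : ℝ, ψ y = Complex.exp (-(μ : ℂ) * y)) ∧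
          (∀ y : ℝ, -(deriv (deriv ψ) y) + (k ^ 2 : ℂ) * ψ y = (lam : ℂ) * ψ y) ∧
          ((K + k * ℓ : ℝ) : ℂ) * ψ 0 - (M : ℂ) * deriv ψ 0 = 0) ↔
        (lam = k ^ 2 - (K + k * ℓ) ^ 2 / M ^ 2 ∧ 0 < (K + k * ℓ) / (-M)))) ∧
    (K = 0 → |ℓ| = |M| → ∀ k : ℝ, 0 < k * ℓ / (-M) →
      ∃ ψ : ℝ → ℂ, ∃ μ : ℝ, 0 < μ ∧
        (∀ y : ℝ, ψ y = Complex.exp (-(μ : ℂ) * y)) ∧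
        (∀ y : ℝ, -(deriv (deriv ψ) y) + (k ^ 2 : ℂ) * ψ y = (0 : ℂ)) ∧
        ((K + k * ℓ : ℝ) : ℂ) * ψ 0 - (M : ℂ) * deriv ψ 0 = 0) := by
  constructor
  · intro k lam _
    constructor
    · rintro ⟨ψ, μ, hμ, hψ, hode, hbc⟩
      have hψfun : ψ = fun y : ℝ => Complex.exp (-(μ : ℂ) * y) := funext hψ
      subst hψfun
      rw [deriv_cexp_real (-(μ : ℂ))] at hbc
      have hbc0 : ((K + k * ℓ : ℝ) : ℂ) + (M : ℂ) * μ = 0 := by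
        simp only [Complex.ofReal_zero, mul_zero, Complex.exp_zero, mul_one] at hbc
        linear_combination hbc
      have hbc' : (K + k * ℓ) + M * μ = 0 := by exact_mod_cast hbc0
      have hode0 := hode 0
      rw [deriv2_cexp_real (-(μ : ℂ))] at hode0
      simp only [Complex.ofReal_zero, mul_zero, Complex.exp_zero, mul_one] at hode0
      have hode0c : (k : ℂ) ^ 2 - (μ : ℂ) ^ 2 = (lam : ℂ) := by linear_combination hode0
      have hode0' : k ^ 2 - μ ^ 2 = lam := by exact_mod_cast hode0c
      have hμval : μ = (K + k * ℓ) / (-M) := by rw [eq_div_iff (neg_ne_zero.mpr hM)]; linarith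
      refine ⟨?_, by rw [← hμval]; exact hμ⟩
      rw [← hode0', hμval, div_pow, neg_sq]
    · rintro ⟨h1, h2⟩
      exact key K ℓ M hM k lam h1 h2
  · intro hK habs k hk
    have hℓM : ℓ ^ 2 = M ^ 2 := by
      have h1 := sq_abs ℓ
      have h2 := sq_abs M
      rw [habs] at h1; linarith
    have h1 : (0 : ℝ) = k ^ 2 - (K + k * ℓ) ^ 2 / M ^ 2 := by
      rw [hK]; field_simp; nlinarith [hℓM]
    have h2 : 0 < (K + k * ℓ) / (-M) := by rw [hK]; simpa using hk
    simpa using key K ℓ M hM k 0 h1 h2
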